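/- Let c > 0 and d ≥ 0 be real numbers. The function h : ℝ → ℝ defined by h(a) = d * log (exp a / (exp a + c)) + c * log (c / (exp a + c)) is strictly concave on ℝ; moreover, if d > 0 then h has a unique global maximizer, attained at a = log d. -/

import Mathlib

open Real

/-- The function `h a = d * log (exp a / (exp a + c)) + c * log (c / (exp a + c))` is
strictly concave on ℝ for `c > 0`, `d ≥ 0`; if `d > 0` it has a unique global maximizer,
attained at `a = log d`. -/
theorem stmt_4 (c d : ℝ) (hc : 0 < c) (hd : 0 ≤ d)
    (h : ℝ → ℝ)
    (hh : ∀ a, h a = d * Real.log (Real.exp a / (Real.exp a + c))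
        + c * Real.log (c / (Real.exp a + c))) :
    StrictConcaveOn ℝ Set.univ h ∧
      (0 < d → (∀ a, h a ≤ h (Real.log d)) ∧
        (∀ a, (∀ b, h b ≤ h a) → a = Real.log d)) := by
  have hpos : ∀ a : ℝ, 0 < Real.exp a + c := fun a => by positivity
  have hg : ∀ a, h a = d * a + c * Real.log c - (d + c) * Real.log (Real.exp a + c) := by
    intro a
    rw [hh a, Real.log_div (Real.exp_ne_zero a) (hpos a).ne',
      Real.log_div hc.ne' (hpos a).ne', Real.log_exp]
    ring
  have hfun : h = fun a => d * a + c * Real.log c - (d + c) * Real.log (Real.exp a + c) :=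
    funext hg
  -- first derivative
  have hder : ∀ a : ℝ, HasDerivAt h (c * (d - Real.exp a) / (Real.exp a + c)) a := by
    intro a
    rw [hfun]
    have h1 : HasDerivAt (fun a : ℝ => Real.exp a + c) (Real.exp a) a :=
      (Real.hasDerivAt_exp a).add_const c
    have h2 : HasDerivAt (fun a : ℝ => Real.log (Real.exp a + c))
        (Real.exp a / (Real.exp a + c)) a := h1.log (hpos a).ne'
    have h3 : HasDerivAt (fun a : ℝ => d * a + c * Real.log c) d a := by
      simpa using ((hasDerivAt_id a).const_mul d).add_const (c * Real.log c)
    have h4 := h3.sub (h2.const_mul (d + c))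
    have he : d - (d + c) * (Real.exp a / (Real.exp a + c))
        = c * (d - Real.exp a) / (Real.exp a + c) := by
      field_simp
      ring
    rw [← he]
    exact h4
  have hderiv_eq : deriv h = fun a => c * (d - Real.exp a) / (Real.exp a + c) :=
    funext fun a => (hder a).deriv
  have hcont : Continuous h := by
    rw [continuous_iff_continuousAt]
    exact fun a => (hder a).differentiableAt.continuousAt
  -- second derivative
  have hder2 : ∀ a : ℝ, HasDerivAt (deriv h)
      (-(c * (d + c) * Real.exp a) / (Real.exp a + c) ^ 2) a := by
    intro a
    rw [hderiv_eq]
    have h1 : HasDerivAt (fun a : ℝ => Real.exp a + c) (Real.exp a) a :=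
      (Real.hasDerivAt_exp a).add_const c
    have hnum : HasDerivAt (fun a : ℝ => c * (d - Real.exp a)) (c * (-Real.exp a)) a :=
      (((Real.hasDerivAt_exp a).const_sub d)).const_mul c
    have := hnum.div h1 (hpos a).ne'
    have he2 : -(c * (d + c) * Real.exp a) / (Real.exp a + c) ^ 2
        = (c * -Real.exp a * (Real.exp a + c) - c * (d - Real.exp a) * Real.exp a)
          / (Real.exp a + c) ^ 2 := by
      congr 1
      ring
    rw [he2]
    exact this
  have hstrict : StrictConcaveOn ℝ Set.univ h := by
    apply strictConcaveOn_of_deriv2_neg convex_univ hcont.continuousOn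
    intro x _
    have : deriv^[2] h x = -(c * (d + c) * Real.exp x) / (Real.exp x + c) ^ 2 := by
      simp only [Function.iterate_succ, Function.iterate_zero, Function.comp_apply, id]
      exact (hder2 x).deriv
    rw [this]
    have hnum : 0 < c * (d + c) * Real.exp x := by positivity
    have hden : 0 < (Real.exp x + c) ^ 2 := by positivity
    exact div_neg_of_neg_of_pos (neg_neg_of_pos hnum) hden
  refine ⟨hstrict, fun hdpos => ?_⟩
  -- monotonicity on pieces
  have hmono : StrictMonoOn h (Set.Iic (Real.log d)) := by
    apply strictMonoOn_of_deriv_pos (convex_Iic _) hcont.continuousOn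
    intro x hx
    rw [interior_Iic] at hx
    rw [hderiv_eq]
    have hlt : Real.exp x < d := by
      have := Real.exp_lt_exp.2 hx
      rwa [Real.exp_log hdpos] at this
    have : 0 < c * (d - Real.exp x) := by
      have := sub_pos.2 hlt
      positivity
    exact div_pos this (hpos x)
  have hanti : StrictAntiOn h (Set.Ici (Real.log d)) := by
    apply strictAntiOn_of_deriv_neg (convex_Ici _) hcont.continuousOn
    intro x hx
    rw [interior_Ici] at hx
    rw [hderiv_eq]
    have hlt : d < Real.exp x := by
      have := Real.exp_lt_exp.2 hx
      rwa [Real.exp_log hdpos] at this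
    have hneg : c * (d - Real.exp x) < 0 :=
      mul_neg_of_pos_of_neg hc (sub_neg.2 hlt)
    exact div_neg_of_neg_of_pos hneg (hpos x)
  have hmax : ∀ a, h a ≤ h (Real.log d) := by
    intro a
    rcases lt_trichotomy a (Real.log d) with hlt | heq | hgt
    · exact (hmono hlt.le Set.self_mem_Iic hlt).le
    · rw [heq]
    · exact (hanti Set.self_mem_Ici hgt.le hgt).le
  refine ⟨hmax, fun a ha => ?_⟩
  by_contra hne
  rcases lt_or_gt_of_ne hne with hlt | hgt
  · exact absurd (ha (Real.log d)) (not_le.2 (hmono hlt.le Set.self_mem_Iic hlt))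
  · exact absurd (ha (Real.log d)) (not_le.2 (hanti Set.self_mem_Ici hgt.le hgt))
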